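/- Let (X, 𝒜, μ) be a finite measure space with total mass V := μ(X) > 0. Let N ≥ 1, let g₁, …, g_N : X → ℝ be nonnegative bounded measurable functions, let λ₁, …, λ_N be positive reals, let β₁, …, β_N be reals not all zero, let c > 0, ℓ > 0, and let ε ∈ (0, 1/2]. Assume: (i) Σᵢ λᵢ² gᵢ(x) = c for every x ∈ X; (ii) |λᵢ^{−2} e^{−2βᵢ} − 1| ≤ ε for every i. Set γᵢ := ∫_X λᵢ² gᵢ dμ and η := (maxᵢ |βᵢ|)/ℓ. Then | ∫_X (Σᵢ βᵢ e^{−2βᵢ} gᵢ(x)) / (π ℓ η · Σᵢ e^{−2βᵢ} gᵢ(x)) dμ(x) − (Σᵢ βᵢ γᵢ)/(π ℓ η c) | ≤ ε·V. -/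

import Mathlib

open MeasureTheory Finset

/-- Weighted mean absolute deviation bound: values in `[-ε,ε]` have
weighted MAD about the weighted mean at most `ε`. -/
lemma mad_aux {N : ℕ} (a δ : Fin N → ℝ) (c ε : ℝ) (hc : 0 < c) (hε : 0 < ε)
    (ha : ∀ i, 0 ≤ a i) (hsum : ∑ i, a i = c) (hδ : ∀ i, |δ i| ≤ ε) :
    ∑ i, a i * |δ i - (∑ j, a j * δ j) / c| ≤ ε * c := by
  set m := (∑ j, a j * δ j) / c with hm
  have hS1 : ∑ j, a j * δ j = m * c := by rw [hm]; field_simp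
  have hmabs : |m| ≤ ε := by
    rw [hm, abs_div, abs_of_pos hc, div_le_iff₀ hc]
    calc |∑ j, a j * δ j| ≤ ∑ j, |a j * δ j| := Finset.abs_sum_le_sum_abs _ _
      _ ≤ ∑ j, a j * ε := Finset.sum_le_sum fun i _ => by
          rw [abs_mul, abs_of_nonneg (ha i)]
          exact mul_le_mul_of_nonneg_left (hδ i) (ha i)
      _ = ε * c := by rw [← Finset.sum_mul, hsum, mul_comm]
  have h2 := abs_le.mp hmabs
  have hkey : ∀ i ∈ Finset.univ, a i * |δ i - m|
      ≤ a i * ((δ i + ε) * (ε - m) / ε - (δ i - m)) := by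
    intro i _
    refine mul_le_mul_of_nonneg_left ?_ (ha i)
    have h1 := abs_le.mp (hδ i)
    rcases le_or_gt (δ i) m with h | h
    · rw [abs_of_nonpos (by linarith)]
      have : 0 ≤ (δ i + ε) * (ε - m) / ε :=
        div_nonneg (mul_nonneg (by linarith) (by linarith)) hε.le
      linarith
    · rw [abs_of_pos (by linarith)]
      have hmul : 0 ≤ (ε - δ i) * (ε + m) :=
        mul_nonneg (by linarith) (by linarith)
      have hP : 2 * (δ i - m) ≤ (δ i + ε) * (ε - m) / ε := by
        rw [le_div_iff₀ hε]; nlinarith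
      linarith
  calc ∑ i, a i * |δ i - m|
      ≤ ∑ i, a i * ((δ i + ε) * (ε - m) / ε - (δ i - m)) := Finset.sum_le_sum hkey
    _ = ((ε - m) / ε - 1) * (∑ i, a i * δ i) + ε * ∑ i, a i := by
        rw [Finset.mul_sum, Finset.mul_sum, ← Finset.sum_add_distrib]
        exact Finset.sum_congr rfl fun i _ => by field_simp; ring
    _ = ε * c - m ^ 2 * c / ε := by rw [hS1, hsum]; field_simp; ring
    _ ≤ ε * c := by
        have : 0 ≤ m ^ 2 * c / ε := by positivity
        linarith

/-- Core algebraic estimate. -/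
lemma core_aux {N : ℕ} (a δ b : Fin N → ℝ) (c ε M : ℝ) (hc : 0 < c)
    (hε : 0 < ε) (hε' : ε ≤ 1 / 2) (hM : 0 ≤ M)
    (ha : ∀ i, 0 ≤ a i) (hsum : ∑ i, a i = c)
    (hδ : ∀ i, |δ i| ≤ ε) (hb : ∀ i, |b i| ≤ M) :
    |(∑ i, b i * (a i * (1 + δ i))) / (∑ i, a i * (1 + δ i)) -
      (∑ i, b i * a i) / c| ≤ 2 * M * ε := by
  set E := ∑ i, a i * δ i with hE
  have hEabs : |E| ≤ ε * c := by
    calc |E| ≤ ∑ i, |a i * δ i| := Finset.abs_sum_le_sum_abs _ _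
      _ ≤ ∑ i, a i * ε := Finset.sum_le_sum fun i _ => by
          rw [abs_mul, abs_of_nonneg (ha i)]
          exact mul_le_mul_of_nonneg_left (hδ i) (ha i)
      _ = ε * c := by rw [← Finset.sum_mul, hsum, mul_comm]
  have hE1 := (abs_le.mp hEabs).1
  have hh : ∑ i, a i * (1 + δ i) = c + E := by
    simp only [mul_add, mul_one, Finset.sum_add_distrib, hsum, hE]
  have hhalf : c / 2 ≤ c + E := by nlinarith
  have hhpos : 0 < c + E := by linarith
  have hmad : ∑ i, a i * |δ i - E / c| ≤ ε * c := mad_aux a δ c ε hc hε ha hsum hδ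
  set T := ∑ i, b i * (a i * (δ i - E / c)) with hT
  have hTabs : |T| ≤ M * (ε * c) := by
    calc |T| ≤ ∑ i, |b i * (a i * (δ i - E / c))| := Finset.abs_sum_le_sum_abs _ _
      _ ≤ ∑ i, M * (a i * |δ i - E / c|) := Finset.sum_le_sum fun i _ => by
          rw [abs_mul, abs_mul, abs_of_nonneg (ha i)]
          exact mul_le_mul (hb i) le_rfl (mul_nonneg (ha i) (abs_nonneg _)) hM
      _ = M * ∑ i, a i * |δ i - E / c| := by rw [Finset.mul_sum]
      _ ≤ M * (ε * c) := mul_le_mul_of_nonneg_left hmad hM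
  have hf : ∑ i, b i * (a i * (1 + δ i))
      = (∑ i, b i * a i) + (∑ i, b i * (a i * δ i)) := by
    rw [← Finset.sum_add_distrib]
    exact Finset.sum_congr rfl fun i _ => by ring
  have hTid : T = (∑ i, b i * (a i * δ i)) - E / c * (∑ i, b i * a i) := by
    rw [hT, Finset.mul_sum, ← Finset.sum_sub_distrib]
    exact Finset.sum_congr rfl fun i _ => by ring
  have hiden : (∑ i, b i * (a i * (1 + δ i))) / (∑ i, a i * (1 + δ i)) -
      (∑ i, b i * a i) / c = T / (c + E) := by
    rw [hh, hf, hTid]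
    field_simp
    ring
  rw [hiden, abs_div, abs_of_pos hhpos, div_le_iff₀ hhpos]
  calc |T| ≤ M * (ε * c) := hTabs
    _ = 2 * M * ε * (c / 2) := by ring
    _ ≤ 2 * M * ε * (c + E) :=
        mul_le_mul_of_nonneg_left hhalf (by positivity)

/-- Analytic content of (6.12)–(6.15): the derivative of the Chow-norm function
at `s = −η` computed from a polybalanced metric equals the main term
`(Σᵢ βᵢγᵢ)/(πℓηc)` up to an error of size `ε·V`. -/
theorem stmt_4 {X : Type*} [MeasurableSpace X] (μ : Measure X) [IsFiniteMeasure μ]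
    (hV : 0 < (μ Set.univ).toReal)
    (N : ℕ) (hN : 1 ≤ N) (g : Fin N → X → ℝ) (lam β : Fin N → ℝ)
    (hg0 : ∀ i x, 0 ≤ g i x) (hgb : ∀ i, ∃ M : ℝ, ∀ x, g i x ≤ M)
    (hgm : ∀ i, Measurable (g i))
    (hlam : ∀ i, 0 < lam i) (hβ : β ≠ 0)
    (c ℓ ε : ℝ) (hc : 0 < c) (hℓ : 0 < ℓ) (hε : 0 < ε) (hε' : ε ≤ 1 / 2)
    (hi : ∀ x, ∑ i, (lam i) ^ 2 * g i x = c)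
    (hii : ∀ i, |((lam i) ^ 2)⁻¹ * Real.exp (-(2 * β i)) - 1| ≤ ε)
    (η : ℝ)
    (hη : η = (Finset.univ.sup'
      (Finset.univ_nonempty_iff.mpr (Fin.pos_iff_nonempty.mp hN))
      fun i => |β i|) / ℓ) :
    |(∫ x, (∑ i, β i * Real.exp (-(2 * β i)) * g i x) /
        (Real.pi * ℓ * η * ∑ i, Real.exp (-(2 * β i)) * g i x) ∂μ) -
      (∑ i, β i * ∫ x, (lam i) ^ 2 * g i x ∂μ) / (Real.pi * ℓ * η * c)|
      ≤ ε * (μ Set.univ).toReal := by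
  have hNE : (Finset.univ : Finset (Fin N)).Nonempty :=
    Finset.univ_nonempty_iff.mpr (Fin.pos_iff_nonempty.mp hN)
  set M : ℝ := Finset.univ.sup' hNE (fun i => |β i|) with hMdef
  have hη' : η = M / ℓ := hη
  have hβM : ∀ i, |β i| ≤ M := by
    intro i
    rw [hMdef]
    exact Finset.le_sup' (fun j => |β j|) (Finset.mem_univ i)
  have hMpos : 0 < M := by
    obtain ⟨i₀, hi₀⟩ := Function.ne_iff.mp hβ
    exact lt_of_lt_of_le (abs_pos.mpr hi₀) (hβM i₀)
  have hπM : 0 < Real.pi * M := mul_pos Real.pi_pos hMpos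
  have hD : Real.pi * ℓ * η = Real.pi * M := by
    rw [hη']; field_simp
  -- pointwise estimate
  have hpt : ∀ x : X,
      |(∑ i, β i * Real.exp (-(2 * β i)) * g i x) /
        (Real.pi * ℓ * η * ∑ i, Real.exp (-(2 * β i)) * g i x) -
       (∑ i, β i * ((lam i) ^ 2 * g i x)) / (Real.pi * ℓ * η * c)| ≤ ε := by
    intro x
    set a : Fin N → ℝ := fun i => lam i ^ 2 * g i x with hadef
    set δ : Fin N → ℝ := fun i => (lam i ^ 2)⁻¹ * Real.exp (-(2 * β i)) - 1 with hδdef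
    have hrw : ∀ i, Real.exp (-(2 * β i)) * g i x = a i * (1 + δ i) := by
      intro i
      have hl2 : (lam i) ^ 2 ≠ 0 := pow_ne_zero 2 (hlam i).ne'
      show Real.exp (-(2 * β i)) * g i x
        = lam i ^ 2 * g i x * (1 + ((lam i ^ 2)⁻¹ * Real.exp (-(2 * β i)) - 1))
      field_simp
      rw [add_sub_cancel, mul_assoc, mul_div_assoc', mul_div_cancel_left₀ _ hl2, mul_comm]
    have hcore := core_aux a δ β c ε M hc hε hε' hMpos.le
      (fun i => mul_nonneg (by positivity) (hg0 i x)) (hi x)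
      (fun i => hii i) hβM
    have h1 : ∑ i, β i * Real.exp (-(2 * β i)) * g i x
        = ∑ i, β i * (a i * (1 + δ i)) :=
      Finset.sum_congr rfl fun i _ => by rw [mul_assoc, hrw i]
    have h2 : ∑ i, Real.exp (-(2 * β i)) * g i x = ∑ i, a i * (1 + δ i) :=
      Finset.sum_congr rfl fun i _ => hrw i
    have h3 : ∑ i, β i * ((lam i) ^ 2 * g i x) = ∑ i, β i * a i := rfl
    rw [hD, h1, h2, h3]
    have e1 : ∀ p q : ℝ, p / (Real.pi * M * q) = p / q / (Real.pi * M) := fun p q => by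
      rw [div_div, mul_comm]
    rw [e1, e1, ← sub_div, abs_div, abs_of_pos hπM, div_le_iff₀ hπM]
    calc |(∑ i, β i * (a i * (1 + δ i))) / (∑ i, a i * (1 + δ i)) -
          (∑ i, β i * a i) / c| ≤ 2 * M * ε := hcore
      _ ≤ ε * (Real.pi * M) := by nlinarith [Real.pi_gt_three, mul_pos hε hMpos]
  -- integrability
  have hgint : ∀ i, Integrable (g i) μ := by
    intro i
    obtain ⟨Mi, hMi⟩ := hgb i
    exact (integrable_const Mi).mono' (hgm i).aestronglyMeasurable
      (Filter.Eventually.of_forall fun x => by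
        rw [Real.norm_eq_abs, abs_of_nonneg (hg0 i x)]; exact hMi x)
  have hSint : Integrable (fun x => ∑ i, β i * ((lam i) ^ 2 * g i x)) μ :=
    integrable_finset_sum _ fun i _ => ((hgint i).const_mul ((lam i) ^ 2)).const_mul (β i)
  have hGint : Integrable
      (fun x => (∑ i, β i * ((lam i) ^ 2 * g i x)) / (Real.pi * ℓ * η * c)) μ :=
    hSint.div_const _
  have hFmeas : AEStronglyMeasurable (fun x =>
      (∑ i, β i * Real.exp (-(2 * β i)) * g i x) /
        (Real.pi * ℓ * η * ∑ i, Real.exp (-(2 * β i)) * g i x)) μ := by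
    apply Measurable.aestronglyMeasurable
    fun_prop
  have hFint : Integrable (fun x =>
      (∑ i, β i * Real.exp (-(2 * β i)) * g i x) /
        (Real.pi * ℓ * η * ∑ i, Real.exp (-(2 * β i)) * g i x)) μ := by
    refine Integrable.mono' (hGint.abs.add (integrable_const ε)) hFmeas
      (Filter.Eventually.of_forall fun x => ?_)
    have h1 := hpt x
    have h2 := abs_sub_abs_le_abs_sub
      ((∑ i, β i * Real.exp (-(2 * β i)) * g i x) /
        (Real.pi * ℓ * η * ∑ i, Real.exp (-(2 * β i)) * g i x))
      ((∑ i, β i * ((lam i) ^ 2 * g i x)) / (Real.pi * ℓ * η * c))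
    rw [Real.norm_eq_abs]
    simp only [Pi.add_apply]
    linarith
  have hmain : (∑ i, β i * ∫ x, (lam i) ^ 2 * g i x ∂μ) / (Real.pi * ℓ * η * c)
      = ∫ x, (∑ i, β i * ((lam i) ^ 2 * g i x)) / (Real.pi * ℓ * η * c) ∂μ := by
    rw [integral_div]
    congr 1
    rw [integral_finset_sum _
      (fun i _ => ((hgint i).const_mul ((lam i) ^ 2)).const_mul (β i))]
    exact Finset.sum_congr rfl fun i _ => (integral_const_mul _ _).symm
  rw [hmain, ← integral_sub hFint hGint]
  calc |∫ x, ((∑ i, β i * Real.exp (-(2 * β i)) * g i x) /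
          (Real.pi * ℓ * η * ∑ i, Real.exp (-(2 * β i)) * g i x) -
        (∑ i, β i * ((lam i) ^ 2 * g i x)) / (Real.pi * ℓ * η * c)) ∂μ|
      ≤ ∫ x, |(∑ i, β i * Real.exp (-(2 * β i)) * g i x) /
          (Real.pi * ℓ * η * ∑ i, Real.exp (-(2 * β i)) * g i x) -
        (∑ i, β i * ((lam i) ^ 2 * g i x)) / (Real.pi * ℓ * η * c)| ∂μ :=
        by
          simpa [Real.norm_eq_abs] using norm_integral_le_integral_norm
            (μ := μ) (f := fun x => (∑ i, β i * Real.exp (-(2 * β i)) * g i x) /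
              (Real.pi * ℓ * η * ∑ i, Real.exp (-(2 * β i)) * g i x) -
              (∑ i, β i * ((lam i) ^ 2 * g i x)) / (Real.pi * ℓ * η * c))
    _ ≤ ∫ _x, ε ∂μ := integral_mono ((hFint.sub hGint).abs) (integrable_const ε)
        fun x => hpt x
    _ = ε * (μ Set.univ).toReal := by rw [integral_const, smul_eq_mul, mul_comm]; rfl
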